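/- Let k ∈ ℤ and t ∈ ℕ. The ℚ-linear map R_k → R_{k+t} given by multiplication by ω^t is injective if 2k + t ≤ d and surjective if 2k + t ≥ d. Explicitly: if 2k + t ≤ d, then every homogeneous polynomial P ∈ ℚ[x_1,…,x_n] of degree k with ω^t·P ∈ (x_1^m,…,x_n^m) satisfies P ∈ (x_1^m,…,x_n^m); if 2k + t ≥ d and k ≥ 0, then for every homogeneous Q ∈ ℚ[x_1,…,x_n] of degree k + t there exists a homogeneous P of degree k with Q − ω^t·P ∈ (x_1^m,…,x_n^m). -/

import Mathlib

open MvPolynomial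

namespace LefschetzAux

noncomputable section

variable {n m : ℕ}

lemma degree_univ (a : Fin n →₀ ℕ) : a.degree = ∑ i, a i :=
  Finset.sum_subset (Finset.subset_univ _)
    (fun i _ hi => Finsupp.notMem_support_iff.mp hi)

lemma degree_add (a b : Fin n →₀ ℕ) : (a + b).degree = a.degree + b.degree := by
  simp [degree_univ, Finsupp.add_apply, Finset.sum_add_distrib]

lemma degree_single (i : Fin n) (c : ℕ) : (Finsupp.single i c).degree = c := by
  simp [degree_univ, Finsupp.single_apply]

lemma isHomog_iff {P : MvPolynomial (Fin n) ℚ} {k : ℕ} :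
    P.IsHomogeneous k ↔ ∀ a : Fin n →₀ ℕ, coeff a P ≠ 0 → a.degree = k := by
  have hw : ∀ a : Fin n →₀ ℕ, Finsupp.weight 1 a = a.degree :=
    fun a => (DFunLike.congr_fun Finsupp.degree_eq_weight_one a).symm
  constructor
  · intro h a ha
    rw [← hw]; exact h ha
  · intro h a ha
    rw [hw]; exact h a ha

/-- The ideal generated by the `m`-th powers of the variables. -/
def Imn (n m : ℕ) : Ideal (MvPolynomial (Fin n) ℚ) :=
  Ideal.span (Set.range fun i : Fin n => (X i : MvPolynomial (Fin n) ℚ) ^ m)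

lemma mem_Imn_iff {P : MvPolynomial (Fin n) ℚ} :
    P ∈ Imn n m ↔ ∀ a : Fin n →₀ ℕ, (∀ i, a i < m) → coeff a P = 0 := by
  constructor
  · intro h
    refine Submodule.span_induction ?_ ?_ ?_ ?_ h
    · rintro x ⟨i, rfl⟩ a ha
      show coeff a (X i ^ m) = 0
      rw [X_pow_eq_monomial, coeff_monomial, if_neg]
      intro he
      have := ha i
      rw [← he] at this
      simp at this
    · intro a _; exact coeff_zero a
    · intro x y _ _ hx hy a ha
      rw [coeff_add, hx a ha, hy a ha, add_zero]
    · intro r x _ hx a ha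
      rw [smul_eq_mul, coeff_mul]
      refine Finset.sum_eq_zero fun p hp => ?_
      rw [Finset.HasAntidiagonal.mem_antidiagonal] at hp
      have h2 : ∀ i, p.2 i < m := by
        intro i
        refine lt_of_le_of_lt ?_ (ha i)
        rw [← hp]
        exact le_add_self
      rw [hx p.2 h2, mul_zero]
  · intro h
    rw [P.as_sum]
    refine Ideal.sum_mem _ fun a ha => ?_
    by_cases hgood : ∀ i, a i < m
    · rw [h a hgood, monomial_zero]
      exact zero_mem _
    · push_neg at hgood
      obtain ⟨i, hi⟩ := hgood
      have hle : Finsupp.single i m ≤ a := Finsupp.single_le_iff.mpr hi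
      have key : monomial a (coeff a P)
          = (X i ^ m : MvPolynomial (Fin n) ℚ)
            * monomial (a - Finsupp.single i m) (coeff a P) := by
        rw [X_pow_eq_monomial, monomial_mul, one_mul, add_tsub_cancel_of_le hle]
      rw [key]
      exact Ideal.mul_mem_right _ _ (Ideal.subset_span ⟨i, rfl⟩)

lemma coeff_pderiv (i : Fin n) (a : Fin n →₀ ℕ) (P : MvPolynomial (Fin n) ℚ) :
    coeff a (pderiv i P) = ((a i : ℚ) + 1) * coeff (a + Finsupp.single i 1) P := by
  induction P using MvPolynomial.induction_on' with
  | add p q hp hq =>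
      rw [map_add, coeff_add, coeff_add, hp, hq, mul_add]
  | monomial s c =>
      rw [pderiv_monomial, coeff_monomial, coeff_monomial]
      by_cases hs : s = a + Finsupp.single i 1
      · subst hs
        rw [if_pos (add_tsub_cancel_right _ _), if_pos rfl, Finsupp.add_apply,
          Finsupp.single_eq_same]
        push_cast
        ring
      · rw [if_neg hs, mul_zero]
        by_cases hd : s - Finsupp.single i 1 = a
        · rw [if_pos hd]
          by_cases hzi : s i = 0
          · simp [hzi]
          · exfalso
            apply hs
            have hle : Finsupp.single i 1 ≤ s := by
              rw [Finsupp.single_le_iff]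
              omega
            rw [← hd, tsub_add_cancel_of_le hle]
        · rw [if_neg hd]

/-- ω = x₁ + ⋯ + x_n -/
def om (n : ℕ) : MvPolynomial (Fin n) ℚ := ∑ i, X i

lemma om_homog : (om n).IsHomogeneous 1 :=
  IsHomogeneous.sum _ _ _ fun i _ => isHomogeneous_X _ i

lemma pderiv_om (j : Fin n) : pderiv j (om n) = 1 := by
  rw [om, map_sum, Finset.sum_eq_single j]
  · exact pderiv_X_self j
  · exact fun i _ hij => pderiv_X_of_ne hij
  · exact fun h => absurd (Finset.mem_univ j) h

/-- Euler's identity for homogeneous polynomials. -/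
lemma euler {P : MvPolynomial (Fin n) ℚ} {k : ℕ} (hP : P.IsHomogeneous k) :
    ∑ i, X i * pderiv i P = C (k : ℚ) * P := by
  apply MvPolynomial.ext
  intro a
  rw [coeff_sum, coeff_C_mul]
  have hterm : ∀ i : Fin n, coeff a (X i * pderiv i P) = (a i : ℚ) * coeff a P := by
    intro i
    rw [coeff_X_mul']
    by_cases hi : i ∈ a.support
    · rw [if_pos hi, coeff_pderiv]
      have h1 : 1 ≤ a i := Nat.one_le_iff_ne_zero.mpr (Finsupp.mem_support_iff.mp hi)
      have h2 : ((a - Finsupp.single i 1 : Fin n →₀ ℕ)) i = a i - 1 := by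
        rw [Finsupp.tsub_apply, Finsupp.single_eq_same]
      have h3 : a - Finsupp.single i 1 + Finsupp.single i 1 = a :=
        tsub_add_cancel_of_le (Finsupp.single_le_iff.mpr h1)
      rw [h2, h3]
      congr 1
      have : ((a i - 1 : ℕ) : ℚ) = (a i : ℚ) - 1 := by
        push_cast [h1]; ring
      rw [this]; ring
    · rw [if_neg hi]
      have : a i = 0 := Finsupp.notMem_support_iff.mp hi
      rw [this]; push_cast; ring
  rw [Finset.sum_congr rfl fun i _ => hterm i, ← Finset.sum_mul]
  by_cases hc : coeff a P = 0
  · rw [hc, mul_zero, mul_zero]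
  · have : a.degree = k := isHomog_iff.mp hP a hc
    rw [← this, degree_univ]
    push_cast
    ring

/-- The "lowering operator" F. -/
def Fop (m : ℕ) (P : MvPolynomial (Fin n) ℚ) : MvPolynomial (Fin n) ℚ :=
  ∑ i, (C ((m : ℚ) - 1) * pderiv i P - X i * pderiv i (pderiv i P))

lemma coeff_Fop (a : Fin n →₀ ℕ) (P : MvPolynomial (Fin n) ℚ) :
    coeff a (Fop m P)
      = ∑ i, ((a i : ℚ) + 1) * ((m : ℚ) - 1 - a i) * coeff (a + Finsupp.single i 1) P := by
  rw [Fop, coeff_sum]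
  refine Finset.sum_congr rfl fun i _ => ?_
  rw [coeff_sub, coeff_C_mul, coeff_pderiv, coeff_X_mul']
  by_cases hi : i ∈ a.support
  · rw [if_pos hi]
    have h1 : 1 ≤ a i := Nat.one_le_iff_ne_zero.mpr (Finsupp.mem_support_iff.mp hi)
    rw [coeff_pderiv, coeff_pderiv]
    have h2 : ((a - Finsupp.single i 1 : Fin n →₀ ℕ)) i = a i - 1 := by
      rw [Finsupp.tsub_apply, Finsupp.single_eq_same]
    have h3 : a - Finsupp.single i 1 + Finsupp.single i 1 = a :=
      tsub_add_cancel_of_le (Finsupp.single_le_iff.mpr h1)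
    rw [h2, h3]
    have : ((a i - 1 : ℕ) : ℚ) = (a i : ℚ) - 1 := by push_cast [h1]; ring
    rw [this]
    ring
  · rw [if_neg hi]
    have h0 : a i = 0 := Finsupp.notMem_support_iff.mp hi
    rw [h0]
    push_cast
    ring

lemma Fop_mem {P : MvPolynomial (Fin n) ℚ} (hP : P ∈ Imn n m) : Fop m P ∈ Imn n m := by
  rw [mem_Imn_iff] at hP ⊢
  intro a ha
  rw [coeff_Fop]
  refine Finset.sum_eq_zero fun i _ => ?_
  by_cases h : a i + 1 < m
  · rw [hP (a + Finsupp.single i 1) ?_, mul_zero]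
    intro j
    by_cases hj : j = i
    · subst hj
      rw [Finsupp.add_apply, Finsupp.single_eq_same]
      exact h
    · rw [Finsupp.add_apply, Finsupp.single_eq_of_ne' (fun e => hj e.symm), add_zero]
      exact ha j
  · have hm' : a i + 1 = m := by have := ha i; omega
    have hz : ((m : ℚ) - 1 - (a i : ℚ)) = 0 := by
      have hc : ((a i + 1 : ℕ) : ℚ) = (m : ℚ) := by rw [hm']
      push_cast at hc
      linarith
    rw [hz, mul_zero, zero_mul]

lemma Fop_homog {P : MvPolynomial (Fin n) ℚ} {k : ℕ} (hP : P.IsHomogeneous k) :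
    (Fop m P).IsHomogeneous (k - 1) := by
  rw [isHomog_iff]
  intro a ha
  rw [coeff_Fop] at ha
  obtain ⟨i, _, hi⟩ := Finset.exists_ne_zero_of_sum_ne_zero ha
  have hco : coeff (a + Finsupp.single i 1) P ≠ 0 := by
    intro h0; rw [h0, mul_zero] at hi; exact hi rfl
  have := isHomog_iff.mp hP _ hco
  rw [degree_add, degree_single] at this
  omega

lemma Fop_homog_zero {P : MvPolynomial (Fin n) ℚ} (hP : P.IsHomogeneous 0) :
    Fop m P = 0 := by
  have hd : ∀ i : Fin n, pderiv i P = 0 := by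
    intro i
    apply MvPolynomial.ext
    intro a
    rw [coeff_pderiv, coeff_zero]
    have : coeff (a + Finsupp.single i 1) P = 0 := by
      by_contra hco
      have := isHomog_iff.mp hP _ hco
      rw [degree_add, degree_single] at this
      omega
    rw [this, mul_zero]
  rw [Fop]
  refine Finset.sum_eq_zero fun i _ => ?_
  rw [hd i, map_zero, mul_zero, mul_zero, sub_zero]

lemma Fop_def (P : MvPolynomial (Fin n) ℚ) :
    Fop m P = ∑ i, (C ((m : ℚ) - 1) * pderiv i P - X i * pderiv i (pderiv i P)) := rfl

/-- The basic sl₂ commutation relation. -/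
lemma comm1 (hm : 1 ≤ m) {P : MvPolynomial (Fin n) ℚ} {k : ℕ} (hP : P.IsHomogeneous k) :
    Fop m (om n * P)
      = om n * Fop m P + C (((n * (m - 1) : ℕ) : ℚ) - 2 * k) * P := by
  have hstep : ∀ i : Fin n,
      C ((m : ℚ) - 1) * pderiv i (om n * P) - X i * pderiv i (pderiv i (om n * P))
        = om n * (C ((m : ℚ) - 1) * pderiv i P - X i * pderiv i (pderiv i P))
          + (C ((m : ℚ) - 1) * P - 2 * (X i * pderiv i P)) := by
    intro i
    rw [pderiv_mul, pderiv_om, one_mul, map_add, pderiv_mul, pderiv_om, one_mul]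
    ring
  rw [Fop_def, Finset.sum_congr rfl fun i _ => hstep i, Finset.sum_add_distrib,
    ← Finset.mul_sum, ← Fop_def, Finset.sum_sub_distrib, Finset.sum_const, ← Finset.mul_sum,
    euler hP]
  congr 1
  rw [Finset.card_univ, Fintype.card_fin, nsmul_eq_mul]
  have hD : (((n * (m - 1) : ℕ)) : ℚ) = (n : ℚ) * ((m : ℚ) - 1) := by
    push_cast [Nat.cast_sub hm]
    ring
  have key : (C ((((n * (m - 1) : ℕ)) : ℚ) - 2 * (k : ℚ)) : MvPolynomial (Fin n) ℚ)
      = C ((n : ℚ) * ((m : ℚ) - 1)) - C (2 * (k : ℚ)) := by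
    rw [← map_sub]
    congr 1
    rw [hD]
  rw [key, ← map_natCast (C : ℚ →+* MvPolynomial (Fin n) ℚ) n, sub_mul]
  congr 1
  · rw [map_mul, mul_assoc]
  · rw [map_mul, map_ofNat (C : ℚ →+* MvPolynomial (Fin n) ℚ) 2, mul_assoc]

/-- Iterated commutation relation. -/
lemma comm_pow (hm : 1 ≤ m) (t : ℕ) :
    ∀ (k : ℕ) (P : MvPolynomial (Fin n) ℚ), P.IsHomogeneous k →
    Fop m (om n ^ (t + 1) * P)
      = om n ^ (t + 1) * Fop m P
        + C (((t : ℚ) + 1) * ((((n * (m - 1) : ℕ)) : ℚ) - 2 * k - t)) * (om n ^ t * P) := by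
  induction t with
  | zero =>
      intro k P hP
      rw [zero_add, pow_one, pow_zero, one_mul, comm1 hm hP]
      have : ((0 : ℕ) : ℚ) + 1 = 1 := by norm_num
      rw [this]
      have h2 : (1 : ℚ) * ((((n * (m - 1) : ℕ)) : ℚ) - 2 * k - ((0 : ℕ) : ℚ))
          = (((n * (m - 1) : ℕ)) : ℚ) - 2 * k := by push_cast; ring
      rw [h2]
  | succ t IH =>
      intro k P hP
      have hsplit : om n ^ (t + 1 + 1) * P = om n ^ (t + 1) * (om n * P) := by ring
      rw [hsplit]
      have hP' : (om n * P).IsHomogeneous (k + 1) := by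
        have := om_homog.mul hP
        rwa [add_comm] at this
      rw [IH (k + 1) (om n * P) hP', comm1 hm hP]
      have hsplit2 : om n ^ t * (om n * P) = om n ^ (t + 1) * P := by ring
      rw [hsplit2]
      have key : (C ((((t + 1 : ℕ) : ℚ) + 1)
            * ((((n * (m - 1) : ℕ)) : ℚ) - 2 * (k : ℚ) - ((t + 1 : ℕ) : ℚ)))
            : MvPolynomial (Fin n) ℚ)
          = C ((((n * (m - 1) : ℕ)) : ℚ) - 2 * (k : ℚ))
            + C (((t : ℚ) + 1)
              * ((((n * (m - 1) : ℕ)) : ℚ) - 2 * ((k + 1 : ℕ) : ℚ) - (t : ℚ))) := by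
        rw [← map_add]
        congr 1
        push_cast
        ring
      rw [key]
      ring

/-- Injectivity half of hard Lefschetz. -/
lemma inj (hm : 1 ≤ m) :
    ∀ k t : ℕ, 2 * k + t ≤ n * (m - 1) → ∀ P : MvPolynomial (Fin n) ℚ, P.IsHomogeneous k →
      om n ^ t * P ∈ Imn n m → P ∈ Imn n m := by
  intro k
  induction k using Nat.strong_induction_on with
  | _ k IHk =>
  intro t
  induction t with
  | zero =>
      intro _ P _ h
      rwa [pow_zero, one_mul] at h
  | succ t IHt =>
      intro hle P hP hmem
      have hFP : Fop m P ∈ Imn n m := by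
        rcases Nat.eq_zero_or_pos k with hk | hk
        · subst hk
          rw [Fop_homog_zero hP]
          exact zero_mem _
        · have h2 : om n ^ (t + 2) * P ∈ Imn n m := by
            have he : om n ^ (t + 2) * P = om n * (om n ^ (t + 1) * P) := by ring
            rw [he]
            exact Ideal.mul_mem_left _ _ hmem
          have h3 := Fop_mem (m := m) h2
          rw [show t + 2 = (t + 1) + 1 from rfl, comm_pow hm (t + 1) k P hP] at h3
          have h5 : (C ((((t + 1 : ℕ) : ℚ) + 1)
                * ((((n * (m - 1) : ℕ)) : ℚ) - 2 * (k : ℚ) - ((t + 1 : ℕ) : ℚ)))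
                : MvPolynomial (Fin n) ℚ) * (om n ^ (t + 1) * P) ∈ Imn n m :=
            Ideal.mul_mem_left _ _ hmem
          have h4 := Ideal.sub_mem _ h3 h5
          rw [add_sub_cancel_right] at h4
          exact IHk (k - 1) (by omega) (t + 1 + 1) (by omega) _ (Fop_homog hP) h4
      have h6 := Fop_mem (m := m) hmem
      rw [comm_pow hm t k P hP] at h6
      have h8 : om n ^ (t + 1) * Fop m P ∈ Imn n m := Ideal.mul_mem_left _ _ hFP
      have h7 := Ideal.sub_mem _ h6 h8
      rw [add_sub_cancel_left] at h7
      have hpos : ((t : ℚ) + 1) * ((((n * (m - 1) : ℕ)) : ℚ) - 2 * (k : ℚ) - (t : ℚ)) ≠ 0 := by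
        have h9 : (2 * k + (t + 1) : ℕ) ≤ n * (m - 1) := hle
        have h10 : ((2 * k + (t + 1) : ℕ) : ℚ) ≤ ((n * (m - 1) : ℕ) : ℚ) := by
          exact_mod_cast h9
        have h10' : ((2 * k + (t + 1) : ℕ) : ℚ) = 2 * (k : ℚ) + (t : ℚ) + 1 := by
          push_cast; ring
        rw [h10'] at h10
        have hgt1 : ((n * (m - 1) : ℕ) : ℚ) - 2 * (k : ℚ) - (t : ℚ) ≥ 1 := by linarith
        have hgt2 : (t : ℚ) + 1 > 0 := by positivity
        nlinarith
      have h11 := Ideal.mul_mem_left _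
        (C ((((t : ℚ) + 1) * ((((n * (m - 1) : ℕ)) : ℚ) - 2 * (k : ℚ) - (t : ℚ)))⁻¹)) h7
      rw [← mul_assoc, ← map_mul, inv_mul_cancel₀ hpos, map_one, one_mul] at h11
      exact IHt (by omega) P hP h11

lemma homog_mem_of_gt (hm : 1 ≤ m) {j : ℕ} (hj : n * (m - 1) < j)
    {Q : MvPolynomial (Fin n) ℚ} (hQ : Q.IsHomogeneous j) : Q ∈ Imn n m := by
  rw [mem_Imn_iff]
  intro a ha
  by_contra hc
  have hdeg := isHomog_iff.mp hQ a hc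
  have hbound : a.degree ≤ n * (m - 1) := by
    rw [degree_univ]
    calc ∑ i, a i ≤ ∑ _i : Fin n, (m - 1) :=
          Finset.sum_le_sum fun i _ => by have := ha i; omega
      _ = n * (m - 1) := by
          rw [Finset.sum_const, Finset.card_univ, Fintype.card_fin, smul_eq_mul]
  omega

/-- The type of "good" exponent vectors of total degree `j`. -/
def GdT (n m j : ℕ) : Type := {a : Fin n →₀ ℕ // (∀ i, a i < m) ∧ a.degree = j}

noncomputable instance (j : ℕ) : Fintype (GdT n m j) := by
  apply Fintype.ofInjective (fun a : GdT n m j => (fun i => (⟨a.1 i, a.2.1 i⟩ : Fin m)))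
  intro a b hab
  apply Subtype.ext
  apply Finsupp.ext
  intro i
  exact congrArg Fin.val (congrFun hab i)

/-- The top exponent vector (m-1, …, m-1). -/
def tau (n m : ℕ) : Fin n →₀ ℕ := Finsupp.equivFunOnFinite.symm fun _ => m - 1

lemma tau_apply (i : Fin n) : tau n m i = m - 1 := rfl

lemma flip_mem (hm : 1 ≤ m) {j j' : ℕ} (hjj : j + j' = n * (m - 1)) (a : Fin n →₀ ℕ)
    (h : ∀ i, a i < m) (hd : a.degree = j) :
    (∀ i, (tau n m - a) i < m) ∧ (tau n m - a).degree = j' := by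
  have happ : ∀ i, (tau n m - a) i = (m - 1) - a i := by
    intro i
    rw [Finsupp.tsub_apply, tau_apply]
  constructor
  · intro i
    rw [happ i]
    omega
  · have hsum : (∑ i, ((m - 1) - a i)) + (∑ i, a i) = n * (m - 1) := by
      rw [← Finset.sum_add_distrib]
      have : ∀ i : Fin n, ((m - 1) - a i) + a i = m - 1 := fun i => by have := h i; omega
      rw [Finset.sum_congr rfl fun i _ => this i, Finset.sum_const, Finset.card_univ,
        Fintype.card_fin, smul_eq_mul]
    have hda : ∑ i, a i = j := by rw [← degree_univ, hd]
    rw [degree_univ, Finset.sum_congr rfl fun i _ => happ i]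
    omega

/-- Complementation bijection on good exponents. -/
def flipGd (hm : 1 ≤ m) {j j' : ℕ} (hjj : j + j' = n * (m - 1)) : GdT n m j ≃ GdT n m j' where
  toFun a := ⟨tau n m - a.1, flip_mem hm hjj a.1 a.2.1 a.2.2⟩
  invFun b := ⟨tau n m - b.1, flip_mem hm (by omega) b.1 b.2.1 b.2.2⟩
  left_inv a := by
    apply Subtype.ext
    apply Finsupp.ext
    intro i
    rw [Finsupp.tsub_apply, Finsupp.tsub_apply, tau_apply]
    have := a.2.1 i
    omega
  right_inv b := by
    apply Subtype.ext
    apply Finsupp.ext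
    intro i
    rw [Finsupp.tsub_apply, Finsupp.tsub_apply, tau_apply]
    have := b.2.1 i
    omega

/-- Coefficient-extraction linear map. -/
def qmap (n m j : ℕ) : MvPolynomial (Fin n) ℚ →ₗ[ℚ] (GdT n m j → ℚ) :=
  LinearMap.pi fun a => lcoeff (R := ℚ) a.1

lemma qmap_apply (P : MvPolynomial (Fin n) ℚ) (a : GdT n m j) :
    qmap n m j P a = coeff a.1 P := by
  rw [qmap, LinearMap.pi_apply, lcoeff_apply]

/-- Monomial-assembly linear map. -/
def pmap (n m j : ℕ) : (GdT n m j → ℚ) →ₗ[ℚ] MvPolynomial (Fin n) ℚ :=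
  ∑ a : GdT n m j, (LinearMap.proj a).smulRight (monomial a.1 1)

lemma pmap_apply (c : GdT n m j → ℚ) :
    pmap n m j c = ∑ a : GdT n m j, c a • monomial a.1 1 := by
  rw [pmap, LinearMap.sum_apply]
  exact Finset.sum_congr rfl fun a _ => rfl

lemma pmap_homog (c : GdT n m j → ℚ) : (pmap n m j c).IsHomogeneous j := by
  rw [pmap_apply]
  apply IsHomogeneous.sum
  intro a _
  rw [smul_monomial]
  exact isHomogeneous_monomial _ a.2.2

lemma coeff_pmap (c : GdT n m j → ℚ) (b : GdT n m j) :
    coeff b.1 (pmap n m j c) = c b := by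
  classical
  rw [pmap_apply, coeff_sum, Finset.sum_eq_single b]
  · rw [coeff_smul, coeff_monomial, if_pos rfl, smul_eq_mul, mul_one]
  · intro a _ hab
    rw [coeff_smul, coeff_monomial, if_neg fun h => hab (Subtype.ext h), smul_zero]
  · intro h
    exact absurd (Finset.mem_univ b) h

lemma surj_main (hm : 1 ≤ m) {k t : ℕ} (hd : n * (m - 1) ≤ 2 * k + t)
    (hkt : k + t ≤ n * (m - 1)) (Q : MvPolynomial (Fin n) ℚ)
    (hQ : Q.IsHomogeneous (k + t)) :
    ∃ P : MvPolynomial (Fin n) ℚ, P.IsHomogeneous k ∧ Q - om n ^ t * P ∈ Imn n m := by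
  classical
  obtain ⟨D, hD⟩ : ∃ D, n * (m - 1) = D := ⟨_, rfl⟩
  rw [hD] at hd hkt
  set k' := D - (k + t) with hk'
  set u := (k + t) - k' with hu
  have harith : k' + u = k + t ∧ t ≤ u ∧ k' + (u - t) = k ∧ 2 * k' + u ≤ D ∧
      k' + (k + t) = D := by omega
  obtain ⟨hu1, hu2, hu3, hinj2, hflip⟩ := harith
  let Φ : (GdT n m k' → ℚ) →ₗ[ℚ] (GdT n m (k + t) → ℚ) :=
    (qmap n m (k + t)).comp ((LinearMap.mulLeft ℚ (om n ^ u)).comp (pmap n m k'))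
  have hΦapp : ∀ (c : GdT n m k' → ℚ) (b : GdT n m (k + t)),
      Φ c b = coeff b.1 (om n ^ u * pmap n m k' c) := by
    intro c b
    simp only [Φ, LinearMap.comp_apply, LinearMap.mulLeft_apply, qmap_apply]
  have hprodhomog : ∀ c : GdT n m k' → ℚ,
      (om n ^ u * pmap n m k' c).IsHomogeneous (k + t) := by
    intro c
    have h := (om_homog.pow u).mul (pmap_homog c)
    rwa [show 1 * u + k' = k + t by omega] at h
  have hinj : Function.Injective Φ := by
    rw [injective_iff_map_eq_zero]
    intro c hc
    have hPIm : om n ^ u * pmap n m k' c ∈ Imn n m := by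
      rw [mem_Imn_iff]
      intro a ha
      by_cases hdeg : a.degree = k + t
      · have := congrFun hc (⟨a, ha, hdeg⟩ : GdT n m (k + t))
        have := (hΦapp c _).symm.trans this
        exact this
      · exact (hprodhomog c).coeff_eq_zero hdeg
    have hP := inj hm k' u (by rw [hD]; exact hinj2) (pmap n m k' c) (pmap_homog c) hPIm
    funext b
    have hz := mem_Imn_iff.mp hP b.1 b.2.1
    rw [coeff_pmap] at hz
    exact hz
  have hcard : Fintype.card (GdT n m k') = Fintype.card (GdT n m (k + t)) :=
    Fintype.card_congr (flipGd hm (by rw [hD]; exact hflip))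
  have hfr : Module.finrank ℚ (GdT n m k' → ℚ) = Module.finrank ℚ (GdT n m (k + t) → ℚ) := by
    rw [Module.finrank_fintype_fun_eq_card, Module.finrank_fintype_fun_eq_card, hcard]
  have hsurj : Function.Surjective Φ :=
    (LinearMap.injective_iff_surjective_of_finrank_eq_finrank hfr).mp hinj
  obtain ⟨c, hc⟩ := hsurj (qmap n m (k + t) Q)
  refine ⟨om n ^ (u - t) * pmap n m k' c, ?_, ?_⟩
  · have h := (om_homog.pow (u - t)).mul (pmap_homog c)
    rwa [show 1 * (u - t) + k' = k by omega] at h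
  · have hpow : om n ^ t * (om n ^ (u - t) * pmap n m k' c) = om n ^ u * pmap n m k' c := by
      rw [← mul_assoc, ← pow_add, show t + (u - t) = u by omega]
    rw [hpow, mem_Imn_iff]
    intro a ha
    rw [coeff_sub]
    by_cases hdeg : a.degree = k + t
    · have h1 := hΦapp c (⟨a, ha, hdeg⟩ : GdT n m (k + t))
      rw [hc] at h1
      rw [← h1]; exact sub_eq_zero.mpr (qmap_apply (m := m) (j := k + t) Q ⟨a, ha, hdeg⟩).symm
    · rw [hQ.coeff_eq_zero hdeg, (hprodhomog c).coeff_eq_zero hdeg, sub_zero]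

end

end LefschetzAux

open LefschetzAux in
/-- Hard-Lefschetz-type theorem for `R = ℚ[x₁,…,x_n]/(x₁^m,…,x_n^m)`, `ω = x₁ + ⋯ + x_n`,
`d = n(m-1)`: multiplication by `ω^t : R_k → R_{k+t}` is injective if `2k + t ≤ d` and
surjective if `2k + t ≥ d`. -/
theorem lefschetz (n m : ℕ) (k t : ℕ)
    (Im : Ideal (MvPolynomial (Fin n) ℚ))
    (hIm : Im = Ideal.span (Set.range fun i : Fin n => (X i : MvPolynomial (Fin n) ℚ) ^ m))
    (ω : MvPolynomial (Fin n) ℚ) (hω : ω = ∑ i, X i) :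
    (2 * k + t ≤ n * (m - 1) →
      ∀ P : MvPolynomial (Fin n) ℚ, P.IsHomogeneous k → ω ^ t * P ∈ Im → P ∈ Im) ∧
    (n * (m - 1) ≤ 2 * k + t →
      ∀ Q : MvPolynomial (Fin n) ℚ, Q.IsHomogeneous (k + t) →
        ∃ P : MvPolynomial (Fin n) ℚ, P.IsHomogeneous k ∧ Q - ω ^ t * P ∈ Im) := by
  have hIm' : Im = Imn n m := hIm
  have hω' : ω = om n := hω
  subst hIm' hω'
  constructor
  · intro hle P hP hmem
    rcases Nat.eq_zero_or_pos m with hm0 | hm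
    · subst hm0
      have ht : t = 0 := by omega
      subst ht
      rwa [pow_zero, one_mul] at hmem
    · exact inj hm k t hle P hP hmem
  · intro hge Q hQ
    rcases Nat.eq_zero_or_pos m with hm0 | hm
    · subst hm0
      rcases Nat.eq_zero_or_pos n with hn0 | hn
      · subst hn0
        rcases Nat.eq_zero_or_pos (k + t) with hkt | hkt
        · have ht : t = 0 := by omega
          have hk : k = 0 := by omega
          subst ht
          subst hk
          refine ⟨Q, by simpa using hQ, ?_⟩
          rw [pow_zero, one_mul, sub_self]
          exact zero_mem _
        · have hQ0 : Q = 0 := by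
            apply MvPolynomial.eq_zero_iff.mpr
            intro d
            by_contra hc
            have hdeg := isHomog_iff.mp hQ d hc
            have hd0 : d = 0 := by
              apply Finsupp.ext
              intro i
              exact i.elim0
            rw [hd0, map_zero] at hdeg
            omega
          refine ⟨0, isHomogeneous_zero _ _ _, ?_⟩
          rw [mul_zero, sub_zero, hQ0]
          exact zero_mem _
      · refine ⟨0, isHomogeneous_zero _ _ _, ?_⟩
        have hone : (1 : MvPolynomial (Fin n) ℚ) ∈ Imn n 0 :=
          Ideal.subset_span ⟨⟨0, hn⟩, pow_zero _⟩
        have htop := (Ideal.eq_top_iff_one _).mpr hone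
        rw [htop]
        exact Submodule.mem_top
    · rcases le_or_gt (k + t) (n * (m - 1)) with hle2 | hgt
      · exact surj_main hm hge hle2 Q hQ
      · refine ⟨0, isHomogeneous_zero _ _ _, ?_⟩
        rw [mul_zero, sub_zero]
        exact homog_mem_of_gt hm hgt hQ
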